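/- Let A be an n×n upper Hessenberg matrix with subdiagonal s and upper-triangular entries in {0,t} (t > 0). Viewing det(A) as a polynomial in s, if the coefficient of s^{n−2} vanishes, i.e. a_{11}a_{2n} + a_{12}a_{3n} + ⋯ + a_{1(n−1)}a_{nn} = 0, then the absolute value of the coefficient of s^{n−3}, namely |∑_{1≤i<j≤n−1} a_{1i}·a_{(i+1)j}·a_{(j+1)n}|, is at most ⌊n/2⌋·⌊(n−1)/2⌋·t³. -/

import Mathlib

lemma nat_prod_bound (p q m : ℕ) (h : p + q ≤ m) :
    p * q ≤ ((m + 1) / 2) * (m / 2) := by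
  set a := (m + 1) / 2 with ha
  set b := m / 2 with hb
  have hab : a + b = m := by omega
  have hba : b ≤ a ∧ a ≤ b + 1 := by omega
  have h1 : (p : ℤ) * q ≤ (a : ℤ) * b := by
    have hpq : (p : ℤ) + q ≤ (a : ℤ) + b := by exact_mod_cast hab ▸ h
    nlinarith [sq_nonneg ((p : ℤ) - q), sq_nonneg ((p : ℤ) + q),
      sq_nonneg ((a : ℤ) - b - 1), sq_nonneg ((a : ℤ) - b),
      mul_nonneg (Int.ofNat_nonneg p) (Int.ofNat_nonneg q)]
  exact_mod_cast h1

theorem coeff_bound (m : ℕ) (s t : ℝ) (ht : 0 < t)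
    (A : Matrix (Fin (m + 1)) (Fin (m + 1)) ℝ)
    (hsub : ∀ i j : Fin (m + 1), (i : ℕ) = (j : ℕ) + 1 → A i j = s)
    (hlow : ∀ i j : Fin (m + 1), (j : ℕ) + 1 < (i : ℕ) → A i j = 0)
    (hup : ∀ i j : Fin (m + 1), (i : ℕ) ≤ (j : ℕ) → A i j = 0 ∨ A i j = t)
    (hvanish : ∑ i : Fin m, A 0 i.castSucc * A i.succ (Fin.last m) = 0) :
    |∑ i : Fin m, ∑ j : Fin m,
        if i < j then A 0 i.castSucc * A i.succ j.castSucc * A j.succ (Fin.last m) else 0| ≤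
      (((m + 1) / 2 : ℕ) : ℝ) * ((m / 2 : ℕ) : ℝ) * t ^ 3 := by
  have hnn : ∀ i j : Fin (m + 1), (i : ℕ) ≤ (j : ℕ) → 0 ≤ A i j := by
    intro i j h
    rcases hup i j h with h' | h' <;> rw [h'] <;> linarith
  have hle : ∀ i j : Fin (m + 1), (i : ℕ) ≤ (j : ℕ) → A i j ≤ t := by
    intro i j h
    rcases hup i j h with h' | h' <;> rw [h'] <;> linarith
  have hrow : ∀ i : Fin m, 0 ≤ A 0 i.castSucc ∧ A 0 i.castSucc ≤ t := by
    intro i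
    exact ⟨hnn _ _ (Nat.zero_le _), hle _ _ (Nat.zero_le _)⟩
  have hcol : ∀ i : Fin m, 0 ≤ A i.succ (Fin.last m) ∧ A i.succ (Fin.last m) ≤ t := by
    intro i
    have : (i.succ : ℕ) ≤ ((Fin.last m : Fin (m+1)) : ℕ) := by
      simp [Fin.val_succ, Fin.val_last]
    exact ⟨hnn _ _ this, hle _ _ this⟩
  -- each term of hvanish is zero
  have h0 : ∀ i : Fin m, A 0 i.castSucc = 0 ∨ A i.succ (Fin.last m) = 0 := by
    intro i
    have hz : A 0 i.castSucc * A i.succ (Fin.last m) = 0 := by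
      have := (Finset.sum_eq_zero_iff_of_nonneg (fun i _ =>
        mul_nonneg (hrow i).1 (hcol i).1)).mp hvanish i (Finset.mem_univ i)
      exact this
    exact mul_eq_zero.mp hz
  set B : Finset (Fin m) := Finset.univ.filter (fun i => A 0 i.castSucc ≠ 0) with hB
  set C : Finset (Fin m) := Finset.univ.filter (fun j => A j.succ (Fin.last m) ≠ 0) with hC
  have hdisj : Disjoint B C := by
    rw [Finset.disjoint_left]
    intro i hi hic
    simp only [hB, hC, Finset.mem_filter] at hi hic
    rcases h0 i with h | h
    · exact hi.2 h
    · exact hic.2 h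
  have hcard : B.card + C.card ≤ m := by
    have := Finset.card_union_of_disjoint hdisj
    have hle' : (B ∪ C).card ≤ Fintype.card (Fin m) := Finset.card_le_univ _
    simp only [Fintype.card_fin] at hle'
    omega
  -- bound the sum
  have hterm : ∀ i j : Fin m,
      (if i < j then A 0 i.castSucc * A i.succ j.castSucc * A j.succ (Fin.last m) else 0) ≤
        (if A 0 i.castSucc ≠ 0 then (1:ℝ) else 0) *
          (if A j.succ (Fin.last m) ≠ 0 then t ^ 3 else 0) := by
    intro i j
    by_cases hij : i < j
    · have hij' : (i.succ : ℕ) ≤ (j.castSucc : ℕ) := by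
        simp [Fin.val_succ, Fin.coe_castSucc]
        exact hij
      have h1 := hrow i; have h2 := hcol j
      have h3 : 0 ≤ A i.succ j.castSucc := hnn _ _ hij'
      have h4 : A i.succ j.castSucc ≤ t := hle _ _ hij'
      rw [if_pos hij]
      by_cases ha : A 0 i.castSucc = 0
      · rw [ha, zero_mul, zero_mul]
        split_ifs <;> norm_num <;> positivity
      · by_cases hb : A j.succ (Fin.last m) = 0
        · rw [hb]; simp [ha]
        · rw [if_pos ha, if_pos hb, one_mul]
          calc A 0 i.castSucc * A i.succ j.castSucc * A j.succ (Fin.last m)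
              ≤ t * t * t := by
                apply mul_le_mul (mul_le_mul h1.2 h4 h3 (le_of_lt ht)) h2.2 h2.1
                positivity
            _ = t ^ 3 := by ring
    · rw [if_neg hij]
      by_cases ha : A 0 i.castSucc ≠ 0 <;> by_cases hb : A j.succ (Fin.last m) ≠ 0 <;>
        simp [ha, hb] <;> positivity
  have hsum_nonneg : 0 ≤ ∑ i : Fin m, ∑ j : Fin m,
      if i < j then A 0 i.castSucc * A i.succ j.castSucc * A j.succ (Fin.last m) else 0 := by
    apply Finset.sum_nonneg; intro i _
    apply Finset.sum_nonneg; intro j _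
    by_cases hij : i < j
    · rw [if_pos hij]
      have hij' : (i.succ : ℕ) ≤ (j.castSucc : ℕ) := by
        simp [Fin.val_succ, Fin.coe_castSucc]; exact hij
      exact mul_nonneg (mul_nonneg (hrow i).1 (hnn _ _ hij')) (hcol j).1
    · rw [if_neg hij]
  rw [abs_of_nonneg hsum_nonneg]
  calc ∑ i : Fin m, ∑ j : Fin m,
        (if i < j then A 0 i.castSucc * A i.succ j.castSucc * A j.succ (Fin.last m) else 0)
      ≤ ∑ i : Fin m, ∑ j : Fin m,
          (if A 0 i.castSucc ≠ 0 then (1:ℝ) else 0) *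
            (if A j.succ (Fin.last m) ≠ 0 then t ^ 3 else 0) := by
        apply Finset.sum_le_sum; intro i _
        apply Finset.sum_le_sum; intro j _
        exact hterm i j
    _ = (∑ i : Fin m, if A 0 i.castSucc ≠ 0 then (1:ℝ) else 0) *
          (∑ j : Fin m, if A j.succ (Fin.last m) ≠ 0 then t ^ 3 else 0) := by
        rw [Finset.sum_mul_sum]
    _ = (B.card : ℝ) * ((C.card : ℝ) * t ^ 3) := by
        have h1 : (∑ i : Fin m, if A 0 i.castSucc ≠ 0 then (1:ℝ) else 0) = B.card := by
          rw [Finset.sum_boole]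
        have h2 : (∑ j : Fin m, if A j.succ (Fin.last m) ≠ 0 then t ^ 3 else 0)
            = (C.card : ℝ) * t ^ 3 := by
          rw [Finset.sum_ite, Finset.sum_const, Finset.sum_const, smul_zero, add_zero,
            nsmul_eq_mul, hC]
        rw [h1, h2]
    _ ≤ (((m + 1) / 2 : ℕ) : ℝ) * ((m / 2 : ℕ) : ℝ) * t ^ 3 := by
        have hn := nat_prod_bound B.card C.card m hcard
        have : (B.card : ℝ) * (C.card : ℝ) ≤ (((m + 1) / 2 : ℕ) : ℝ) * ((m / 2 : ℕ) : ℝ) := by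
          exact_mod_cast hn
        nlinarith [pow_pos ht 3]
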